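/- Let T be a tree with σ(T^+) = ℓ + 1 > 0, and let (I, R) be an optimal crosscut pair of T maximizing |I| among all optimal crosscut pairs. Then (a) |R| ≤ ℓ/2, and (b) no pendant edge of T (an edge incident to a leaf) belongs to R. -/

import Mathlib

open Finset

/-- A triple system (3-graph): every edge has exactly 3 vertices. -/
def IsTripleSystem {V : Type*} (H : Finset (Finset V)) : Prop :=
  ∀ e ∈ H, e.card = 3

/-- `H` contains a copy of the hypergraph `F`: there is a map of the vertices of `F`
into the vertices of `H`, injective on the vertices covered by edges of `F`,
sending every edge of `F` to an edge of `H`. -/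
def HasCopy {V W : Type*} [DecidableEq V] (H : Finset (Finset V)) (F : Finset (Finset W)) : Prop :=
  ∃ φ : W → V, Set.InjOn φ {w | ∃ e ∈ F, w ∈ e} ∧ ∀ e ∈ F, e.image φ ∈ H

/-- The Turán number `ex₃(n, F)`: the maximum number of edges in a triple system on
`n` vertices containing no copy of `F`. -/
noncomputable def exTriple {W : Type*} (n : ℕ) (F : Finset (Finset W)) : ℕ :=
  sSup {m | ∃ H : Finset (Finset (Fin n)), IsTripleSystem H ∧ ¬ HasCopy H F ∧ H.card = m}

/-- A crosscut of a hypergraph: a set of vertices containing exactly one vertex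
of every edge. -/
def IsCrosscut {W : Type*} [DecidableEq W] (F : Finset (Finset W)) (X : Finset W) : Prop :=
  ∀ e ∈ F, (e ∩ X).card = 1

/-- `σ(F)`: the minimum size of a crosscut of `F`. -/
noncomputable def crosscutNum {W : Type*} [DecidableEq W] (F : Finset (Finset W)) : ℕ :=
  sInf {m | ∃ X : Finset W, IsCrosscut F X ∧ X.card = m}

/-- The 3-uniform expansion `G⁺` of a graph `G`: each edge `e` of `G` is enlarged by a
new vertex (the vertices of `G` are `Sum.inl`'s; the enlargement vertex of the edge `e`
is `Sum.inr e`, so distinct edges get distinct new vertices). -/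
noncomputable def expansion {V : Type*} [Fintype V] [DecidableEq V] (G : SimpleGraph V) :
    Finset (Finset (V ⊕ Sym2 V)) := by
  classical
  exact G.edgeFinset.image fun e =>
    insert (Sum.inr e) ((Finset.univ.filter fun v => v ∈ e).image Sum.inl)

/-- The set of edges of `G` disjoint from the vertex set `I`; if `I` is independent,
`(I, cutEdges G I)` is the crosscut pair determined by `I`. -/
noncomputable def cutEdges {V : Type*} [Fintype V] [DecidableEq V] (G : SimpleGraph V)
    (I : Finset V) : Finset (Sym2 V) := by
  classical
  exact G.edgeFinset.filter fun e => ∀ a ∈ I, a ∉ e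

/-- A leaf of a graph: a vertex of degree 1, i.e. with a unique neighbour. -/
def IsLeaf {V : Type*} (G : SimpleGraph V) (v : V) : Prop :=
  ∃! w, G.Adj v w

section Helpers
open SimpleGraph
open scoped Classical
variable {V : Type*} [Fintype V] [DecidableEq V] {T : SimpleGraph V}

lemma mem_cutEdges {J : Finset V} {e : Sym2 V} :
    e ∈ cutEdges T J ↔ e ∈ T.edgeFinset ∧ ∀ a ∈ J, a ∉ e := by
  simp [cutEdges]

lemma edge_decomp {e : Sym2 V} (he : e ∈ T.edgeFinset) {v : V} (hv : v ∈ e) :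
    ∃ w, e = s(v, w) ∧ T.Adj v w := by
  induction e using Sym2.ind with | _ x y =>
  rw [mem_edgeFinset, mem_edgeSet] at he
  rcases Sym2.mem_iff.1 hv with rfl | rfl
  · exact ⟨y, rfl, he⟩
  · exact ⟨x, Sym2.eq_swap, he.symm⟩

lemma crosscut_lower (J : Finset V) (hJ : ∀ a ∈ J, ∀ b ∈ J, ¬ T.Adj a b) :
    crosscutNum (expansion T) ≤ J.card + (cutEdges T J).card := by
  classical
  set X : Finset (V ⊕ Sym2 V) := J.image Sum.inl ∪ (cutEdges T J).image Sum.inr with hX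
  have hmemX : ∀ x, x ∈ X ↔ ((∃ a ∈ J, Sum.inl a = x) ∨ ∃ e ∈ cutEdges T J, Sum.inr e = x) := by
    intro x; simp [hX]
  have hcard : X.card = J.card + (cutEdges T J).card := by
    rw [hX, card_union_of_disjoint, card_image_of_injective _ Sum.inl_injective,
      card_image_of_injective _ Sum.inr_injective]
    simp [Finset.disjoint_left]
  have hcross : IsCrosscut (expansion T) X := by
    intro ε hε
    simp only [expansion, mem_image] at hε
    obtain ⟨e, he, rfl⟩ := hε
    induction e using Sym2.ind with | _ u v =>
    have hadj : T.Adj u v := by rwa [mem_edgeFinset, mem_edgeSet] at he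
    have hflt : (Finset.univ.filter fun w => w ∈ s(u, v)) = {u, v} := by
      ext w; simp [Sym2.mem_iff]
    rw [hflt]
    by_cases hc : ∀ a ∈ J, a ∉ s(u, v)
    · have hcut : s(u, v) ∈ cutEdges T J := mem_cutEdges.2 ⟨he, hc⟩
      have : insert (Sum.inr s(u,v)) (({u, v} : Finset V).image Sum.inl) ∩ X
          = {Sum.inr s(u,v)} := by
        ext x
        simp only [mem_inter, mem_insert, mem_image, mem_singleton]
        constructor
        · rintro ⟨hx1, hx2⟩
          rcases hx1 with rfl | ⟨w, hw, rfl⟩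
          · rfl
          · rcases (hmemX _).1 hx2 with ⟨a, haJ, ha⟩ | ⟨f, _, hf⟩
            · cases Sum.inl_injective ha
              rcases hw with rfl | rfl
              · exact absurd (Sym2.mem_mk_left _ _) (hc _ haJ)
              · exact absurd (Sym2.mem_mk_right _ _) (hc _ haJ)
            · exact absurd hf (by simp)
        · rintro rfl
          exact ⟨Or.inl rfl, (hmemX _).2 (Or.inr ⟨_, hcut, rfl⟩)⟩
      rw [this, card_singleton]
    · push_neg at hc
      obtain ⟨a, haJ, hae⟩ := hc
      have hnc : s(u, v) ∉ cutEdges T J := fun h => (mem_cutEdges.1 h).2 a haJ hae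
      have huniq : ∀ b ∈ J, b ∈ s(u, v) → b = a := by
        intro b hbJ hbe
        by_contra hba
        rcases Sym2.mem_iff.1 hae with rfl | rfl <;> rcases Sym2.mem_iff.1 hbe with rfl | rfl
        · exact hba rfl
        · exact hJ _ haJ _ hbJ hadj
        · exact hJ _ haJ _ hbJ hadj.symm
        · exact hba rfl
      have : insert (Sum.inr s(u,v)) (({u, v} : Finset V).image Sum.inl) ∩ X
          = {Sum.inl a} := by
        ext x
        simp only [mem_inter, mem_insert, mem_image, mem_singleton]
        constructor
        · rintro ⟨hx1, hx2⟩
          rcases hx1 with rfl | ⟨w, hw, rfl⟩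
          · rcases (hmemX _).1 hx2 with ⟨b, _, hb⟩ | ⟨f, hf, hfe⟩
            · exact absurd hb (by simp)
            · cases Sum.inr_injective hfe; exact absurd hf hnc
          · rcases (hmemX _).1 hx2 with ⟨b, hbJ, hb⟩ | ⟨f, _, hf⟩
            · cases Sum.inl_injective hb
              have hwe : w ∈ s(u, v) := by
                rcases hw with rfl | rfl
                · exact Sym2.mem_mk_left _ _
                · exact Sym2.mem_mk_right _ _
              rw [huniq w hbJ hwe]
            · exact absurd hf (by simp)
        · rintro rfl
          refine ⟨Or.inr ⟨a, ?_, rfl⟩, (hmemX _).2 (Or.inl ⟨a, haJ, rfl⟩)⟩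
          rcases Sym2.mem_iff.1 hae with rfl | rfl <;> simp
      rw [this, card_singleton]
  calc crosscutNum (expansion T) ≤ X.card := Nat.sInf_le ⟨X, hcross, rfl⟩
    _ = _ := hcard

lemma endpoint_of_dist (r : V) {u : V} (p : T.Walk r u) (hp : p.length = T.dist r u)
    {v : V} (hv : v ∈ p.support) (hd : T.dist r u ≤ T.dist r v) : v = u := by
  have h1 : T.dist r v ≤ (p.takeUntil v hv).length := dist_le _
  have h2 := congr_arg SimpleGraph.Walk.length (p.take_spec hv)
  rw [SimpleGraph.Walk.length_append] at h2
  exact SimpleGraph.Walk.eq_of_length_eq_zero (p := p.dropUntil v hv) (by omega)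

lemma shortest_path_exists (hT : T.IsTree) (r u : V) :
    ∃ p : T.Walk r u, p.IsPath ∧ p.length = T.dist r u := by
  obtain ⟨p, hp⟩ := hT.isConnected.exists_walk_length_eq_dist r u
  exact ⟨p, p.isPath_of_length_eq_dist hp, hp⟩

lemma concat_path (hT : T.IsTree) (r : V) {a b : V} (hab : T.Adj a b)
    {p : T.Walk r a} (hpath : p.IsPath) (hb : b ∉ p.support) : (p.concat hab).IsPath := by
  rw [← SimpleGraph.Walk.isPath_reverse_iff, SimpleGraph.Walk.reverse_concat]
  exact hpath.reverse.cons (by simpa using hb)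

lemma dist_ne_of_adj (hT : T.IsTree) (r : V) {a b : V} (hab : T.Adj a b) :
    T.dist r a ≠ T.dist r b := by
  intro h
  obtain ⟨p, hpath, hlen⟩ := shortest_path_exists hT r a
  have hb : b ∉ p.support := fun hbm =>
    hab.ne (endpoint_of_dist r p hlen hbm (le_of_eq h)).symm
  have hq : (p.concat hab).IsPath := concat_path hT r hab hpath hb
  obtain ⟨p', hp', hlen'⟩ := shortest_path_exists hT r b
  have heq := (hT.existsUnique_path r b).unique hq hp'
  have : (p.concat hab).length = p'.length := by rw [heq]
  rw [SimpleGraph.Walk.length_concat, hlen, hlen', h] at this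
  omega

lemma dist_succ_of_adj (hT : T.IsTree) (r : V) {a b : V} (hab : T.Adj a b)
    (h : T.dist r a < T.dist r b) : T.dist r b = T.dist r a + 1 := by
  have h1 : T.dist r b ≤ T.dist r a + T.dist a b := hT.isConnected.dist_triangle
  have h2 : T.dist a b = 1 := dist_eq_one_iff_adj.2 hab
  omega

lemma parent_unique (hT : T.IsTree) (r : V) {a a' b : V} (hab : T.Adj a b) (hab' : T.Adj a' b)
    (h1 : T.dist r b = T.dist r a + 1) (h2 : T.dist r b = T.dist r a' + 1) : a = a' := by
  obtain ⟨p, hpath, hlen⟩ := shortest_path_exists hT r a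
  obtain ⟨p', hpath', hlen'⟩ := shortest_path_exists hT r a'
  have hb : b ∉ p.support := fun hbm =>
    hab.ne (endpoint_of_dist r p hlen hbm (by omega)).symm
  have hb' : b ∉ p'.support := fun hbm =>
    hab'.ne (endpoint_of_dist r p' hlen' hbm (by omega)).symm
  have hq : (p.concat hab).IsPath := concat_path hT r hab hpath hb
  have hq' : (p'.concat hab').IsPath := concat_path hT r hab' hpath' hb'
  have heq := (hT.existsUnique_path r b).unique hq hq'
  have ha : a ∈ (p'.concat hab').support := by
    rw [← heq]
    rw [SimpleGraph.Walk.support_concat]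
    exact List.mem_append.2 (Or.inl (SimpleGraph.Walk.end_mem_support p))
  rw [SimpleGraph.Walk.support_concat] at ha
  rcases List.mem_append.1 ha with ha | ha
  · exact endpoint_of_dist r p' hlen' ha (by omega)
  · rw [List.mem_singleton] at ha; exact absurd ha hab.ne

noncomputable def childFun (T : SimpleGraph V) (r : V) : Sym2 V → V :=
  Sym2.lift ⟨fun a b => if T.dist r a < T.dist r b then b
      else if T.dist r b < T.dist r a then a else r, by
    intro a b
    rcases lt_trichotomy (T.dist r a) (T.dist r b) with h | h | h
    · simp [h, asymm h]
    · simp [h.not_lt, (h.symm).not_lt]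
    · simp [h, asymm h]⟩

lemma childFun_spec (hT : T.IsTree) (r : V) {e : Sym2 V} (he : e ∈ T.edgeFinset) :
    ∃ a b, e = s(a, b) ∧ T.Adj a b ∧ childFun T r e = b ∧ T.dist r b = T.dist r a + 1 := by
  induction e using Sym2.ind with | _ x y =>
  have hadj : T.Adj x y := by rwa [mem_edgeFinset, mem_edgeSet] at he
  rcases lt_or_gt_of_ne (dist_ne_of_adj hT r hadj) with h | h
  · exact ⟨x, y, rfl, hadj, by simp [childFun, Sym2.lift_mk, h], dist_succ_of_adj hT r hadj h⟩
  · refine ⟨y, x, Sym2.eq_swap, hadj.symm, ?_, dist_succ_of_adj hT r hadj.symm h⟩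
    simp [childFun, Sym2.lift_mk, h, asymm h]

lemma childFun_mem (hT : T.IsTree) (r : V) {e : Sym2 V} (he : e ∈ T.edgeFinset) :
    childFun T r e ∈ e := by
  obtain ⟨a, b, rfl, _, hc, _⟩ := childFun_spec hT r he
  rw [hc]; exact Sym2.mem_mk_right _ _

lemma childFun_ne_root (hT : T.IsTree) (r : V) {e : Sym2 V} (he : e ∈ T.edgeFinset) :
    childFun T r e ≠ r := by
  obtain ⟨a, b, rfl, _, hc, hd⟩ := childFun_spec hT r he
  rw [hc]
  intro hbr; subst hbr
  rw [dist_self] at hd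
  omega

lemma childFun_injOn (hT : T.IsTree) (r : V) :
    Set.InjOn (childFun T r) (T.edgeFinset : Set (Sym2 V)) := by
  intro e1 h1 e2 h2 hfe
  rw [Finset.mem_coe] at h1 h2
  obtain ⟨a1, b1, rfl, hadj1, hc1, hd1⟩ := childFun_spec hT r h1
  obtain ⟨a2, b2, rfl, hadj2, hc2, hd2⟩ := childFun_spec hT r h2
  rw [hc1, hc2] at hfe
  subst hfe
  rw [parent_unique hT r hadj1 hadj2 hd1 hd2]

end Helpers

/-- Let `T` be a tree with `σ(T⁺) = ℓ + 1 > 0` and let `(I, R)` (where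
`R = cutEdges T I`) be an optimal crosscut pair of `T` maximizing `|I|` among all
optimal crosscut pairs. Then (a) `|R| ≤ ℓ/2`, and (b) no pendant edge of `T` (an edge
containing a leaf) belongs to `R`. -/
theorem optimal_crosscut_pair_props {V : Type*} [Fintype V] [DecidableEq V]
    (T : SimpleGraph V) (hT : T.IsTree) (ℓ : ℕ)
    (hσ : crosscutNum (expansion T) = ℓ + 1)
    (I : Finset V) (hind : ∀ a ∈ I, ∀ b ∈ I, ¬ T.Adj a b)
    (hopt : I.card + (cutEdges T I).card = ℓ + 1)
    (hmax : ∀ J : Finset V, (∀ a ∈ J, ∀ b ∈ J, ¬ T.Adj a b) →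
      J.card + (cutEdges T J).card = ℓ + 1 → J.card ≤ I.card) :
    2 * (cutEdges T I).card ≤ ℓ ∧
      ∀ e ∈ cutEdges T I, ∀ v, v ∈ e → ¬ IsLeaf T v := by
  classical
  set R := cutEdges T I with hRdef
  have hIe : ∀ e ∈ R, ∀ a ∈ I, a ∉ e := fun e he => (mem_cutEdges.1 he).2
  have hRE : ∀ e ∈ R, e ∈ T.edgeFinset := fun e he => (mem_cutEdges.1 he).1
  -- every endpoint of an edge of R has a neighbour in I
  have key : ∀ v, (∃ e ∈ R, v ∈ e) → ∃ w ∈ I, T.Adj v w := by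
    rintro v ⟨e, heR, hve⟩
    by_contra hno
    push_neg at hno
    have hvI : v ∉ I := fun h => hIe e heR v h hve
    have hJind : ∀ a ∈ insert v I, ∀ b ∈ insert v I, ¬ T.Adj a b := by
      intro a ha b hb hadj
      rcases Finset.mem_insert.1 ha with h | h
      · rcases Finset.mem_insert.1 hb with h' | h'
        · rw [h, h'] at hadj; exact T.loopless.irrefl _ hadj
        · rw [h] at hadj; exact hno b h' hadj
      · rcases Finset.mem_insert.1 hb with h' | h'
        · rw [h'] at hadj; exact hno a h hadj.symm
        · exact hind a h b h' hadj
    have hsub : cutEdges T (insert v I) ⊆ R.erase e := by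
      intro f hf
      rw [mem_cutEdges] at hf
      refine Finset.mem_erase.2 ⟨?_, mem_cutEdges.2 ⟨hf.1, fun a ha => hf.2 a (Finset.mem_insert_of_mem ha)⟩⟩
      exact fun h => hf.2 v (Finset.mem_insert_self v I) (h ▸ hve)
    have hcard : (cutEdges T (insert v I)).card ≤ R.card - 1 := by
      calc (cutEdges T (insert v I)).card ≤ (R.erase e).card := Finset.card_le_card hsub
        _ = R.card - 1 := Finset.card_erase_of_mem heR
    have hlow := crosscut_lower (T := T) (insert v I) hJind
    rw [hσ] at hlow
    have hRpos : 1 ≤ R.card := Finset.card_pos.2 ⟨e, heR⟩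
    have hJcard : (insert v I).card = I.card + 1 := Finset.card_insert_of_notMem hvI
    have heq : (insert v I).card + (cutEdges T (insert v I)).card = ℓ + 1 := by omega
    have := hmax _ hJind heq
    omega
  constructor
  · -- part (a)
    rcases R.eq_empty_or_nonempty with hRe | ⟨e₀, he₀⟩
    · simp [hRe]
    set S := Finset.univ.filter (fun v : V => ∃ e ∈ R, v ∈ e) with hSdef
    have hSmem : ∀ v : V, v ∈ S ↔ ∃ e ∈ R, v ∈ e := by intro v; simp [hSdef]
    have hSI : ∀ v ∈ S, v ∉ I := by
      intro v hv hvI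
      obtain ⟨e, he, hve⟩ := (hSmem v).1 hv
      exact hIe e he v hvI hve
    have hgex : ∀ v : V, ∃ w, v ∈ S → w ∈ I ∧ T.Adj v w := by
      intro v
      by_cases h : v ∈ S
      · obtain ⟨w, hw1, hw2⟩ := key v ((hSmem v).1 h)
        exact ⟨w, fun _ => ⟨hw1, hw2⟩⟩
      · exact ⟨v, fun hv => absurd hv h⟩
    choose g hg using hgex
    have hv₀S : e₀.out.1 ∈ S := (hSmem _).2 ⟨e₀, he₀, Sym2.out_fst_mem e₀⟩
    set r := g e₀.out.1 with hrdef
    have hrI : r ∈ I := (hg _ hv₀S).1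
    set E := R ∪ S.image (fun s => s(s, g s)) with hEdef
    have hEedge : ∀ e ∈ E, e ∈ T.edgeFinset := by
      intro e he
      rcases Finset.mem_union.1 he with he | he
      · exact hRE e he
      · obtain ⟨s, hs, rfl⟩ := Finset.mem_image.1 he
        rw [SimpleGraph.mem_edgeFinset, SimpleGraph.mem_edgeSet]
        exact (hg s hs).2
    have hEcard : E.card = R.card + S.card := by
      rw [hEdef, Finset.card_union_of_disjoint, Finset.card_image_of_injOn]
      · intro s hs t ht hst
        rcases Sym2.eq_iff.1 hst with ⟨h1, _⟩ | ⟨h1, h2⟩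
        · exact h1
        · exact absurd ((h1 ▸ (hg t (by rwa [Finset.mem_coe] at ht)).1)) (hSI s (by rwa [Finset.mem_coe] at hs))
      · rw [Finset.disjoint_right]
        rintro e he heR
        obtain ⟨s, hs, rfl⟩ := Finset.mem_image.1 he
        exact hIe _ heR (g s) (hg s hs).1 (Sym2.mem_mk_right _ _)
    have himg : ∀ e ∈ E, childFun T r e ∈ (S ∪ I).erase r := by
      intro e he
      refine Finset.mem_erase.2 ⟨childFun_ne_root hT r (hEedge e he), ?_⟩
      rcases Finset.mem_union.1 he with heR | heI
      · exact Finset.mem_union_left _ ((hSmem _).2 ⟨e, heR, childFun_mem hT r (hEedge e he)⟩)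
      · obtain ⟨s, hs, rfl⟩ := Finset.mem_image.1 heI
        have := childFun_mem hT r (hEedge _ he)
        rcases Sym2.mem_iff.1 this with h | h
        · exact Finset.mem_union_left _ (by rw [h]; exact hs)
        · exact Finset.mem_union_right _ (by rw [h]; exact (hg s hs).1)
    have hinj : Set.InjOn (childFun T r) (E : Set (Sym2 V)) := fun e1 h1 e2 h2 hfe =>
      childFun_injOn hT r (by simpa using hEedge e1 (by simpa using h1))
        (by simpa using hEedge e2 (by simpa using h2)) hfe
    have hle : E.card ≤ ((S ∪ I).erase r).card :=
      Finset.card_le_card_of_injOn (childFun T r) himg hinj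
    have hdisj : Disjoint S I := by
      rw [Finset.disjoint_left]; exact fun a ha hai => hSI a ha hai
    have hrm : r ∈ S ∪ I := Finset.mem_union_right _ hrI
    have h1 : ((S ∪ I).erase r).card = (S ∪ I).card - 1 := Finset.card_erase_of_mem hrm
    have h2 : (S ∪ I).card = S.card + I.card := Finset.card_union_of_disjoint hdisj
    have h3 : 1 ≤ (S ∪ I).card := Finset.card_pos.2 ⟨r, hrm⟩
    omega
  · -- part (b)
    rintro e heR v hve ⟨u, hu, huniq⟩
    obtain ⟨w, hew, hadj⟩ := edge_decomp (hRE e heR) hve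
    have hwu : w = u := huniq w hadj
    subst hwu
    have hvI : v ∉ I := fun h => hIe e heR v h hve
    have hJind : ∀ a ∈ insert v I, ∀ b ∈ insert v I, ¬ T.Adj a b := by
      intro a ha b hb hadj'
      rcases Finset.mem_insert.1 ha with h | h
      · rcases Finset.mem_insert.1 hb with h' | h'
        · rw [h, h'] at hadj'; exact T.loopless.irrefl _ hadj'
        · rw [h] at hadj'
          have := huniq b hadj'
          exact hIe e heR b h' (by rw [this, hew]; exact Sym2.mem_mk_right _ _)
      · rcases Finset.mem_insert.1 hb with h' | h'
        · rw [h'] at hadj'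
          have := huniq a hadj'.symm
          exact hIe e heR a h (by rw [this, hew]; exact Sym2.mem_mk_right _ _)
        · exact hind a h b h' hadj'
    have hcut : cutEdges T (insert v I) = R.erase e := by
      ext f
      constructor
      · intro hf
        rw [mem_cutEdges] at hf
        refine Finset.mem_erase.2 ⟨?_, mem_cutEdges.2 ⟨hf.1, fun a ha => hf.2 a (Finset.mem_insert_of_mem ha)⟩⟩
        exact fun h => hf.2 v (Finset.mem_insert_self v I) (h ▸ hve)
      · intro hf
        obtain ⟨hfe, hfR⟩ := Finset.mem_erase.1 hf
        rw [mem_cutEdges] at hfR ⊢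
        refine ⟨hfR.1, fun a ha => ?_⟩
        rcases Finset.mem_insert.1 ha with rfl | ha
        · intro hvf
          obtain ⟨z, hfz, hadjz⟩ := edge_decomp hfR.1 hvf
          have := huniq z hadjz
          exact hfe (by rw [hfz, this, ← hew])
        · exact hfR.2 a ha
    have hRpos : 1 ≤ R.card := Finset.card_pos.2 ⟨e, heR⟩
    have hJcard : (insert v I).card = I.card + 1 := Finset.card_insert_of_notMem hvI
    have heq : (insert v I).card + (cutEdges T (insert v I)).card = ℓ + 1 := by
      rw [hcut, Finset.card_erase_of_mem heR]; omega
    have := hmax _ hJind heq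
    omega
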